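/- Generalized winding: let (G,\leq) be a totally ordered group and M a central, cofinal, discrete subgroup with first positive element z such that every g \in G satisfies h \leq g < hz for some h \in M. Then G/M can be cyclically ordered by the winding construction, and if D is the convex hull of \langle z \rangle in G then G/M \cong D/\langle z \rangle. -/

import Mathlib

/-- A cyclically ordered group: a ternary relation satisfying R1-R5. -/
def IsCyclicOrder {G : Type*} [Group G] (R : G → G → G → Prop) : Prop :=
  (∀ x y z : G, R x y z → x ≠ y ∧ y ≠ z ∧ z ≠ x) ∧
  (∀ x y z : G, x ≠ y → y ≠ z → z ≠ x → R x y z ∨ R x z y) ∧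
  (∀ x y z : G, R x y z → R y z x) ∧
  (∀ x y z u : G, R x y z → R y u z → R x u z) ∧
  (∀ x y z u v : G, R x y z → R (u * x * v) (u * y * v) (u * z * v))

/-- Generalized winding: if `M` is a central, cofinal, discrete subgroup of a
totally ordered group `G`, with first positive element `z`, such that every
element of `G` lies between some `h ∈ M` and `h * z`, then the winding relation
cyclically orders `G/M`; moreover, `D` being the convex hull of `⟨z⟩`, the
natural map `D → G/M` is surjective with kernel `⟨z⟩`, i.e. `G/M = D/⟨z⟩`. -/
theorem generalized_winding {G : Type*} [Group G] [LinearOrder G]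
    [CovariantClass G G (· * ·) (· < ·)]
    [CovariantClass G G (Function.swap (· * ·)) (· < ·)]
    (M : Subgroup G) (hcent : M ≤ Subgroup.center G)
    (hcof : ∀ g : G, ∃ m ∈ M, g ≤ m)
    (z : G) (hzM : z ∈ M) (hz1 : 1 < z) (hzmin : ∀ m ∈ M, 1 < m → z ≤ m)
    (hdisc : ∀ g : G, ∃ h ∈ M, h ≤ g ∧ g < h * z) :
    letI : M.Normal := ⟨fun n hn g => by
      rw [Subgroup.mem_center_iff.mp (hcent hn) g, mul_inv_cancel_right]
      exact hn⟩
    IsCyclicOrder (fun a b c : G ⧸ M =>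
      ∃ g h k : G, (g : G ⧸ M) = a ∧ (h : G ⧸ M) = b ∧ (k : G ⧸ M) = c ∧
        1 ≤ g ∧ g < z ∧ 1 ≤ h ∧ h < z ∧ 1 ≤ k ∧ k < z ∧
        ((g < h ∧ h < k) ∨ (h < k ∧ k < g) ∨ (k < g ∧ g < h))) ∧
    (∀ a : G ⧸ M, ∃ d : G,
      (∃ m n : ℤ, z ^ m ≤ d ∧ d ≤ z ^ n) ∧ (d : G ⧸ M) = a) ∧
    (∀ d : G, (∃ m n : ℤ, z ^ m ≤ d ∧ d ≤ z ^ n) →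
      ((d : G ⧸ M) = (1 : G ⧸ M) ↔ ∃ n : ℤ, d = z ^ n)) := by
  letI : M.Normal := ⟨fun n hn g => by
      rw [Subgroup.mem_center_iff.mp (hcent hn) g, mul_inv_cancel_right]
      exact hn⟩
  haveI : CovariantClass G G (· * ·) (· ≤ ·) := covariantClass_le_of_lt G G _
  haveI : CovariantClass G G (Function.swap (· * ·)) (· ≤ ·) :=
    covariantClass_le_of_lt G G _
  -- centrality
  have hzc : ∀ m ∈ M, ∀ g : G, g * m = m * g := fun m hm g =>
    Subgroup.mem_center_iff.mp (hcent hm) g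
  -- elements of M in [1, z) are trivial
  have hM1 : ∀ m ∈ M, 1 ≤ m → m < z → m = 1 := by
    intro m hm h1 h2
    rcases eq_or_lt_of_le h1 with h | h
    · exact h.symm
    · exact absurd (hzmin m hm h) (not_le.mpr h2)
  -- uniqueness of representatives in [1, z)
  have huniq : ∀ g g' : G, 1 ≤ g → g < z → 1 ≤ g' → g' < z →
      (g : G ⧸ M) = (g' : G ⧸ M) → g = g' := by
    have main : ∀ g g' : G, 1 ≤ g → g < z → 1 ≤ g' → g' < z → g ≤ g' →
        (g : G ⧸ M) = (g' : G ⧸ M) → g = g' := by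
      intro g g' hg1 hgz hg1' hgz' hle he
      have hm : g⁻¹ * g' ∈ M := QuotientGroup.eq.mp he
      have h1 : (1 : G) ≤ g⁻¹ * g' := by
        calc (1 : G) = g⁻¹ * g := (inv_mul_cancel g).symm
        _ ≤ g⁻¹ * g' := mul_le_mul_right hle _
      have hinv : g⁻¹ ≤ 1 := by
        have := mul_le_mul_right hg1 g⁻¹
        simpa using this
      have h2 : g⁻¹ * g' < z := by
        calc g⁻¹ * g' ≤ 1 * g' := mul_le_mul_left hinv _
        _ = g' := one_mul _
        _ < z := hgz'
      exact inv_mul_eq_one.mp (hM1 _ hm h1 h2)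
    intro g g' hg1 hgz hg1' hgz' he
    rcases le_total g g' with h | h
    · exact main g g' hg1 hgz hg1' hgz' h he
    · exact (main g' g hg1' hgz' hg1 hgz h he.symm).symm
  -- existence of representatives in [1, z)
  have hrep : ∀ a : G ⧸ M, ∃ g : G, (g : G ⧸ M) = a ∧ 1 ≤ g ∧ g < z := by
    intro a
    obtain ⟨x, rfl⟩ := QuotientGroup.mk_surjective a
    obtain ⟨h, hhM, h1, h2⟩ := hdisc x
    refine ⟨h⁻¹ * x, ?_, ?_, ?_⟩
    · rw [QuotientGroup.eq]
      have e : (h⁻¹ * x)⁻¹ * x = h := by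
        have e0 : (h⁻¹ * x)⁻¹ * x = x⁻¹ * (h * x) := by group
        rw [e0, ← hzc h hhM x, inv_mul_cancel_left]
      rw [e]; exact hhM
    · have := mul_le_mul_right h1 h⁻¹
      simpa using this
    · have := mul_lt_mul_right h2 h⁻¹
      simpa [mul_assoc] using this
  -- discreteness step for M : p < q * z implies p ≤ q for p, q ∈ M
  have hstep : ∀ p q : G, p ∈ M → q ∈ M → p < q * z → p ≤ q := by
    intro p q hp hq h
    by_contra hc
    push_neg at hc
    have h1 : (1 : G) < q⁻¹ * p := by
      calc (1 : G) = q⁻¹ * q := (inv_mul_cancel q).symm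
      _ < q⁻¹ * p := mul_lt_mul_right hc _
    have h2 := hzmin _ (M.mul_mem (M.inv_mem hq) hp) h1
    have h3 : q * z ≤ p := by
      calc q * z ≤ q * (q⁻¹ * p) := mul_le_mul_right h2 q
      _ = p := by group
    exact absurd h (not_lt.mpr h3)
  -- the key translation lemma
  have key : ∀ a b g1 g2 g3 r1 r2 r3 : G,
      1 ≤ g1 → g1 < g2 → g2 < g3 → g3 < z →
      1 ≤ r1 → r1 < z → 1 ≤ r2 → r2 < z → 1 ≤ r3 → r3 < z →
      (r1 : G ⧸ M) = ((a * g1 * b : G) : G ⧸ M) →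
      (r2 : G ⧸ M) = ((a * g2 * b : G) : G ⧸ M) →
      (r3 : G ⧸ M) = ((a * g3 * b : G) : G ⧸ M) →
      ((r1 < r2 ∧ r2 < r3) ∨ (r2 < r3 ∧ r3 < r1) ∨ (r3 < r1 ∧ r1 < r2)) := by
    intro a b g1 g2 g3 r1 r2 r3 hg1 h12 h23 hg3 hr1 hr1z hr2 hr2z hr3 hr3z e1 e2 e3
    have H1 : ∃ m ∈ M, a * g1 * b = m * r1 := by
      refine ⟨r1⁻¹ * (a * g1 * b), QuotientGroup.eq.mp e1, ?_⟩
      rw [← hzc _ (QuotientGroup.eq.mp e1) r1, mul_inv_cancel_left]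
    have H2 : ∃ m ∈ M, a * g2 * b = m * r2 := by
      refine ⟨r2⁻¹ * (a * g2 * b), QuotientGroup.eq.mp e2, ?_⟩
      rw [← hzc _ (QuotientGroup.eq.mp e2) r2, mul_inv_cancel_left]
    have H3 : ∃ m ∈ M, a * g3 * b = m * r3 := by
      refine ⟨r3⁻¹ * (a * g3 * b), QuotientGroup.eq.mp e3, ?_⟩
      rw [← hzc _ (QuotientGroup.eq.mp e3) r3, mul_inv_cancel_left]
    obtain ⟨m1, hm1M, E1⟩ := H1
    obtain ⟨m2, hm2M, E2⟩ := H2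
    obtain ⟨m3, hm3M, E3⟩ := H3
    -- bounds: m_i ≤ A_i < m_i * z
    have lb1 : m1 ≤ a * g1 * b := by rw [E1]; simpa using mul_le_mul_right hr1 m1
    have lb2 : m2 ≤ a * g2 * b := by rw [E2]; simpa using mul_le_mul_right hr2 m2
    have lb3 : m3 ≤ a * g3 * b := by rw [E3]; simpa using mul_le_mul_right hr3 m3
    have ub1 : a * g1 * b < m1 * z := by rw [E1]; exact mul_lt_mul_right hr1z m1
    have ub2 : a * g2 * b < m2 * z := by rw [E2]; exact mul_lt_mul_right hr2z m2
    have ub3 : a * g3 * b < m3 * z := by rw [E3]; exact mul_lt_mul_right hr3z m3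
    -- monotonicity of A_i
    have A12 : a * g1 * b < a * g2 * b := mul_lt_mul_left (mul_lt_mul_right h12 a) b
    have A23 : a * g2 * b < a * g3 * b := mul_lt_mul_left (mul_lt_mul_right h23 a) b
    have A31 : a * g3 * b < (a * g1 * b) * z := by
      calc a * g3 * b < a * z * b := mul_lt_mul_left (mul_lt_mul_right hg3 a) b
      _ = a * b * z := by rw [mul_assoc, ← hzc z hzM b, ← mul_assoc]
      _ ≤ a * g1 * b * z := by
          have : a * b ≤ a * g1 * b := by
            have h := mul_le_mul_right hg1 a
            simpa using mul_le_mul_left h b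
          exact mul_le_mul_left this z
    have hm12 : m1 ≤ m2 := hstep m1 m2 hm1M hm2M (lb1.trans_lt (A12.trans ub2))
    have hm23 : m2 ≤ m3 := hstep m2 m3 hm2M hm3M (lb2.trans_lt (A23.trans ub3))
    have hm13zz : m3 < m1 * z * z := by
      have h1 : a * g3 * b < (m1 * z) * z := by
        calc a * g3 * b < (a * g1 * b) * z := A31
        _ < (m1 * z) * z := mul_lt_mul_left ub1 z
      exact lb3.trans_lt h1
    -- the quotient m1⁻¹ * m3 is 1 or z
    have hq3M : m1⁻¹ * m3 ∈ M := M.mul_mem (M.inv_mem hm1M) hm3M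
    have hq31 : (1 : G) ≤ m1⁻¹ * m3 := by
      calc (1 : G) = m1⁻¹ * m1 := (inv_mul_cancel m1).symm
      _ ≤ m1⁻¹ * m3 := mul_le_mul_right (hm12.trans hm23) _
    have hq3zz : m1⁻¹ * m3 < z * z := by
      have := mul_lt_mul_right hm13zz m1⁻¹
      simpa [mul_assoc] using this
    have hcases : m1⁻¹ * m3 = 1 ∨ m1⁻¹ * m3 = z := by
      rcases lt_or_ge (m1⁻¹ * m3) z with h | h
      · exact Or.inl (hM1 _ hq3M hq31 h)
      · right
        have hqM : z⁻¹ * (m1⁻¹ * m3) ∈ M := M.mul_mem (M.inv_mem hzM) hq3M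
        have h1 : (1 : G) ≤ z⁻¹ * (m1⁻¹ * m3) := by
          calc (1 : G) = z⁻¹ * z := (inv_mul_cancel z).symm
          _ ≤ z⁻¹ * (m1⁻¹ * m3) := mul_le_mul_right h _
        have h2 : z⁻¹ * (m1⁻¹ * m3) < z := by
          have := mul_lt_mul_right hq3zz z⁻¹
          simpa [mul_assoc] using this
        have := hM1 _ hqM h1 h2
        have h3 := congrArg (fun t => z * t) this
        simpa [mul_inv_cancel_left] using h3
    -- express r_i = m_i⁻¹ * A_i
    have R1 : r1 = m1⁻¹ * (a * g1 * b) := by rw [E1, inv_mul_cancel_left]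
    have R2 : r2 = m2⁻¹ * (a * g2 * b) := by rw [E2, inv_mul_cancel_left]
    have R3 : r3 = m3⁻¹ * (a * g3 * b) := by rw [E3, inv_mul_cancel_left]
    rcases hcases with hc | hc
    · -- m1 = m3, hence all equal
      have h13 : m1 = m3 := inv_mul_eq_one.mp hc
      have h1 : m1 = m2 := le_antisymm hm12 (h13 ▸ hm23)
      left
      constructor
      · rw [R1, R2, ← h1]
        exact mul_lt_mul_right A12 m1⁻¹
      · rw [R2, R3, ← h1, ← h13]
        exact mul_lt_mul_right A23 m1⁻¹
    · -- m3 = m1 * z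
      have h13 : m3 = m1 * z := by
        rw [← hc, mul_inv_cancel_left]
      -- r3 < r1
      have hr31 : r3 < r1 := by
        have h1 : a * g3 * b < m3 * r1 := by
          calc a * g3 * b < (a * g1 * b) * z := A31
          _ = m1 * r1 * z := by rw [E1]
          _ = m3 * r1 := by
              rw [h13, mul_assoc m1 z r1, ← hzc z hzM r1, ← mul_assoc]
        have := mul_lt_mul_right h1 m3⁻¹
        rw [inv_mul_cancel_left] at this
        rw [R3]; exact this
      -- m2 = m1 or m2 = m3
      have hq2M : m1⁻¹ * m2 ∈ M := M.mul_mem (M.inv_mem hm1M) hm2M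
      have hq21 : (1 : G) ≤ m1⁻¹ * m2 := by
        calc (1 : G) = m1⁻¹ * m1 := (inv_mul_cancel m1).symm
        _ ≤ m1⁻¹ * m2 := mul_le_mul_right hm12 _
      have hq2z : m1⁻¹ * m2 ≤ z := by
        have h := mul_le_mul_right hm23 m1⁻¹
        rw [h13] at h
        simpa [mul_assoc] using h
      rcases lt_or_eq_of_le hq2z with h | h
      · -- m2 = m1
        have h12m : m1 = m2 := inv_mul_eq_one.mp (hM1 _ hq2M hq21 h)
        right; right
        refine ⟨hr31, ?_⟩
        rw [R1, R2, ← h12m]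
        exact mul_lt_mul_right A12 m1⁻¹
      · -- m2 = m1 * z = m3
        have h23m : m2 = m3 := by
          rw [h13, ← h, mul_inv_cancel_left]
        right; left
        refine ⟨?_, hr31⟩
        rw [R2, R3, h23m]
        exact mul_lt_mul_right A23 m3⁻¹
  refine ⟨⟨?_, ?_, ?_, ?_, ?_⟩, ?_, ?_⟩
  · -- R1 : distinctness
    rintro x y w ⟨g, h, k, ex, ey, ew, hg1, hgz, hh1, hhz, hk1, hkz, hcyc⟩
    have hgh : g ≠ h := by
      rcases hcyc with ⟨c1, c2⟩ | ⟨c1, c2⟩ | ⟨c1, c2⟩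
      · exact c1.ne
      · exact (c1.trans c2).ne'
      · exact c2.ne
    have hhk : h ≠ k := by
      rcases hcyc with ⟨c1, c2⟩ | ⟨c1, c2⟩ | ⟨c1, c2⟩
      · exact c2.ne
      · exact c1.ne
      · exact (c1.trans c2).ne'
    have hkg : k ≠ g := by
      rcases hcyc with ⟨c1, c2⟩ | ⟨c1, c2⟩ | ⟨c1, c2⟩
      · exact (c1.trans c2).ne'
      · exact c2.ne
      · exact c1.ne
    exact ⟨fun e => hgh (huniq g h hg1 hgz hh1 hhz (ex.trans (e.trans ey.symm))),
      fun e => hhk (huniq h k hh1 hhz hk1 hkz (ey.trans (e.trans ew.symm))),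
      fun e => hkg (huniq k g hk1 hkz hg1 hgz (ew.trans (e.trans ex.symm)))⟩
  · -- R2 : totality
    intro x y w hxy hyw hwx
    obtain ⟨g, ex, hg1, hgz⟩ := hrep x
    obtain ⟨h, ey, hh1, hhz⟩ := hrep y
    obtain ⟨k, ew, hk1, hkz⟩ := hrep w
    have hgh : g ≠ h := fun e => hxy (by rw [← ex, ← ey, e])
    have hhk : h ≠ k := fun e => hyw (by rw [← ey, ← ew, e])
    have hkg : k ≠ g := fun e => hwx (by rw [← ew, ← ex, e])
    have htri : ((g < h ∧ h < k) ∨ (h < k ∧ k < g) ∨ (k < g ∧ g < h)) ∨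
        ((g < k ∧ k < h) ∨ (k < h ∧ h < g) ∨ (h < g ∧ g < k)) := by
      rcases hgh.lt_or_gt with h1 | h1
      · rcases hhk.lt_or_gt with h2 | h2
        · exact Or.inl (Or.inl ⟨h1, h2⟩)
        · rcases hkg.lt_or_gt with h3 | h3
          · exact Or.inl (Or.inr (Or.inr ⟨h3, h1⟩))
          · exact Or.inr (Or.inl ⟨h3, h2⟩)
      · rcases hhk.lt_or_gt with h2 | h2
        · rcases hkg.lt_or_gt with h3 | h3
          · exact Or.inl (Or.inr (Or.inl ⟨h2, h3⟩))
          · exact Or.inr (Or.inr (Or.inr ⟨h1, h3⟩))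
        · exact Or.inr (Or.inr (Or.inl ⟨h2, h1⟩))
    rcases htri with ht | ht
    · exact Or.inl ⟨g, h, k, ex, ey, ew, hg1, hgz, hh1, hhz, hk1, hkz, ht⟩
    · exact Or.inr ⟨g, k, h, ex, ew, ey, hg1, hgz, hk1, hkz, hh1, hhz, ht⟩
  · -- R3 : cyclicity
    rintro x y w ⟨g, h, k, ex, ey, ew, hg1, hgz, hh1, hhz, hk1, hkz, hcyc⟩
    exact ⟨h, k, g, ey, ew, ex, hh1, hhz, hk1, hkz, hg1, hgz, by tauto⟩
  · -- R4 : transitivity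
    rintro x y w u ⟨g, h, k, ex, ey, ew, hg1, hgz, hh1, hhz, hk1, hkz, hcyc1⟩
      ⟨h', u', k', ey', eu, ew', hh1', hhz', hu1, huz, hk1', hkz', hcyc2⟩
    have hhh : h' = h := huniq h' h hh1' hhz' hh1 hhz (ey'.trans ey.symm)
    have hkk : k' = k := huniq k' k hk1' hkz' hk1 hkz (ew'.trans ew.symm)
    rw [hhh, hkk] at hcyc2
    refine ⟨g, u', k, ex, eu, ew, hg1, hgz, hu1, huz, hk1, hkz, ?_⟩
    rcases hcyc1 with ⟨c1, c2⟩ | ⟨c1, c2⟩ | ⟨c1, c2⟩ <;>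
      rcases hcyc2 with ⟨d1, d2⟩ | ⟨d1, d2⟩ | ⟨d1, d2⟩
    · exact Or.inl ⟨c1.trans d1, d2⟩
    · exact absurd d2 (lt_asymm c2)
    · exact absurd d1 (lt_asymm c2)
    · exact Or.inr (Or.inl ⟨d2, c2⟩)
    · exact absurd d2 (lt_asymm c1)
    · exact absurd d1 (lt_asymm c1)
    · exact absurd (((c2.trans d1).trans d2).trans c1) (lt_irrefl g)
    · exact Or.inr (Or.inl ⟨d1, c1⟩)
    · exact Or.inr (Or.inr ⟨c1, c2.trans d2⟩)
  · -- R5 : translation invariance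
    rintro x y w u v ⟨g, h, k, ex, ey, ew, hg1, hgz, hh1, hhz, hk1, hkz, hcyc⟩
    obtain ⟨a, ha⟩ := QuotientGroup.mk_surjective u
    obtain ⟨b, hb⟩ := QuotientGroup.mk_surjective v
    obtain ⟨r1, er1, hr11, hr1z⟩ := hrep (u * x * v)
    obtain ⟨r2, er2, hr21, hr2z⟩ := hrep (u * y * v)
    obtain ⟨r3, er3, hr31, hr3z⟩ := hrep (u * w * v)
    have E1 : (r1 : G ⧸ M) = ((a * g * b : G) : G ⧸ M) := by
      rw [er1, ← ha, ← hb, ← ex]; rfl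
    have E2 : (r2 : G ⧸ M) = ((a * h * b : G) : G ⧸ M) := by
      rw [er2, ← ha, ← hb, ← ey]; rfl
    have E3 : (r3 : G ⧸ M) = ((a * k * b : G) : G ⧸ M) := by
      rw [er3, ← ha, ← hb, ← ew]; rfl
    refine ⟨r1, r2, r3, er1, er2, er3, hr11, hr1z, hr21, hr2z, hr31, hr3z, ?_⟩
    rcases hcyc with ⟨c1, c2⟩ | ⟨c1, c2⟩ | ⟨c1, c2⟩
    · exact key a b g h k r1 r2 r3 hg1 c1 c2 hkz hr11 hr1z hr21 hr2z hr31 hr3z E1 E2 E3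
    · have := key a b h k g r2 r3 r1 hh1 c1 c2 hgz hr21 hr2z hr31 hr3z hr11 hr1z E2 E3 E1
      tauto
    · have := key a b k g h r3 r1 r2 hk1 c1 c2 hhz hr31 hr3z hr11 hr1z hr21 hr2z E3 E1 E2
      tauto
  · -- surjectivity of D → G/M
    intro a
    obtain ⟨g, e, h1, h2⟩ := hrep a
    exact ⟨g, ⟨0, 1, by simpa using h1, by simpa using h2.le⟩, e⟩
  · -- kernel is ⟨z⟩
    rintro d ⟨i, j, hi, hj⟩
    have hmono : ∀ p q : ℤ, p < q → z ^ p < z ^ q := by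
      intro p q hpq
      have h0 : (0 : ℤ) < q - p := by omega
      have hlt : (1 : G) < z ^ (q - p) := by
        have he : z ^ (q - p) = z ^ (q - p).toNat := by
          rw [← zpow_natCast, Int.toNat_of_nonneg h0.le]
        rw [he]
        exact one_lt_pow' hz1 (by omega)
      calc z ^ p = z ^ p * 1 := (mul_one _).symm
      _ < z ^ p * z ^ (q - p) := mul_lt_mul_right hlt _
      _ = z ^ q := by rw [← zpow_add]; congr 1; omega
    constructor
    · intro h1
      have hdM : d ∈ M := (QuotientGroup.eq_one_iff d).mp h1
      obtain ⟨n, hn1, hn2⟩ := Int.exists_greatest_of_bdd (P := fun p => z ^ p ≤ d)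
        ⟨j, fun p hp => by
          by_contra hc
          push_neg at hc
          exact absurd (hp.trans hj) (not_le.mpr (hmono j p hc))⟩ ⟨i, hi⟩
      have h3 : d < z ^ (n + 1) := by
        by_contra hc
        push_neg at hc
        exact absurd (hn2 (n + 1) hc) (by omega)
      refine ⟨n, ?_⟩
      have hqM : (z ^ n)⁻¹ * d ∈ M := M.mul_mem (M.inv_mem (M.zpow_mem hzM n)) hdM
      have hq1 : (1 : G) ≤ (z ^ n)⁻¹ * d := by
        calc (1 : G) = (z ^ n)⁻¹ * z ^ n := (inv_mul_cancel _).symm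
        _ ≤ (z ^ n)⁻¹ * d := mul_le_mul_right hn1 _
      have hqz : (z ^ n)⁻¹ * d < z := by
        have h4 : d < z ^ n * z := by rw [← zpow_add_one]; exact h3
        have := mul_lt_mul_right h4 (z ^ n)⁻¹
        simpa [mul_assoc] using this
      have := hM1 _ hqM hq1 hqz
      have h5 := congrArg (fun t => z ^ n * t) this
      simpa [mul_inv_cancel_left] using h5
    · rintro ⟨n, rfl⟩
      exact (QuotientGroup.eq_one_iff _).mpr (M.zpow_mem hzM n)
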